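/- Let (a_n) be a null sequence in R^d that admits d linearly independent Lévy vectors. Then the achievement set S(a_n) = {x ∈ R^d : ∃ ε ∈ {-1,1}^N with ∑_{n=1}^∞ ε_n a_n = x} equals all of R^d. -/

import Mathlib

open Filter Finset Classical

lemma exists_kernel (d : ℕ) (v : ℕ → EuclideanSpace ℝ (Fin d)) (B : Finset ℕ)
    (hB : d + 1 ≤ B.card) :
    ∃ z : ℕ → ℝ, (∀ n ∉ B, z n = 0) ∧ (∃ n ∈ B, z n ≠ 0) ∧ ∑ n ∈ B, z n • v n = 0 := by
  classical
  set φ : (↥B → ℝ) →ₗ[ℝ] EuclideanSpace ℝ (Fin d) :=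
    ∑ i : ↥B, (LinearMap.proj i).smulRight (v i) with hφ
  have hφ_apply : ∀ c : ↥B → ℝ, φ c = ∑ i : ↥B, c i • v i := by
    intro c
    simp [hφ, LinearMap.sum_apply, LinearMap.smulRight_apply]
  have hnotinj : ¬ Function.Injective φ := by
    intro hinj
    have h1 : Module.finrank ℝ (↥B → ℝ) ≤ Module.finrank ℝ (EuclideanSpace ℝ (Fin d)) :=
      LinearMap.finrank_le_finrank_of_injective hinj
    rw [Module.finrank_fintype_fun_eq_card, finrank_euclideanSpace_fin,
      Fintype.card_coe] at h1
    omega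
  rw [Function.not_injective_iff] at hnotinj
  obtain ⟨c₁, c₂, hceq, hcne⟩ := hnotinj
  refine ⟨fun n => if h : n ∈ B then (c₁ - c₂) ⟨n, h⟩ else 0, ?_, ?_, ?_⟩
  · intro n hn; simp [hn]
  · have : c₁ - c₂ ≠ 0 := sub_ne_zero.mpr hcne
    obtain ⟨i, hi⟩ := Function.ne_iff.mp this
    exact ⟨i, i.2, by simpa [i.2] using hi⟩
  · have : φ (c₁ - c₂) = 0 := by rw [map_sub, hceq, sub_self]
    rw [hφ_apply] at this
    rw [← this, ← Finset.sum_attach B fun n => _]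
    apply Finset.sum_congr rfl
    intro i _
    simp [i.2]

lemma round_step (d : ℕ) (v : ℕ → EuclideanSpace ℝ (Fin d)) (B : Finset ℕ)
    (hB : d + 1 ≤ B.card) (x : ℕ → ℝ) (hx : ∀ n ∈ B, |x n| ≤ 1) :
    ∃ (x' : ℕ → ℝ) (j : ℕ), j ∈ B ∧ (∀ n, n ∉ B → x' n = x n) ∧ (∀ n ∈ B, |x' n| ≤ 1) ∧
      (x' j = 1 ∨ x' j = -1) ∧ ∑ n ∈ B, x' n • v n = ∑ n ∈ B, x n • v n := by
  classical
  obtain ⟨z, hz0, ⟨n₀, hn₀B, hn₀⟩, hzsum⟩ := exists_kernel d v B hB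
  set T : Finset ℕ := B.filter (fun n => z n ≠ 0) with hT
  have hTne : T.Nonempty := ⟨n₀, by simp [hT, hn₀B, hn₀]⟩
  set bnd : ℕ → ℝ := fun n => if 0 < z n then (1 - x n) / z n else (-1 - x n) / z n with hbnd
  have hbnd_nonneg : ∀ n ∈ T, 0 ≤ bnd n := by
    intro n hn
    have hnB : n ∈ B := Finset.mem_filter.mp hn |>.1
    have hzn : z n ≠ 0 := (Finset.mem_filter.mp hn).2
    have hxn := hx n hnB
    rw [abs_le] at hxn
    by_cases h : 0 < z n
    · simp only [hbnd, if_pos h]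
      exact div_nonneg (by linarith) h.le
    · simp only [hbnd, if_neg h]
      have hz' : z n < 0 := lt_of_le_of_ne (not_lt.mp h) hzn
      exact div_nonneg_of_nonpos (by linarith) hz'.le
  obtain ⟨j, hjT, hjmin⟩ := T.exists_min_image bnd hTne
  have ht0 : 0 ≤ bnd j := hbnd_nonneg j hjT
  set t := bnd j with htdef
  refine ⟨fun n => x n + t * z n, j, (Finset.mem_filter.mp hjT).1, ?_, ?_, ?_, ?_⟩
  · intro n hn; simp [hz0 n hn]
  · intro n hnB
    by_cases hzn : z n = 0
    · simpa [hzn] using hx n hnB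
    · have hnT : n ∈ T := Finset.mem_filter.mpr ⟨hnB, hzn⟩
      have htle : t ≤ bnd n := hjmin n hnT
      have hxn := hx n hnB; rw [abs_le] at hxn
      rw [abs_le]
      simp only []
      rcases lt_or_gt_of_ne hzn with hneg | hpos
      · have hb : bnd n = (-1 - x n) / z n := by simp [hbnd, not_lt.mpr hneg.le, hneg.not_gt]
        constructor
        · -- x n + t * z n ≥ x n + bnd n * z n = -1
          have : bnd n * z n ≤ t * z n := by
            exact mul_le_mul_of_nonpos_right htle hneg.le
          have hbz : bnd n * z n = -1 - x n := by
            rw [hb, div_mul_cancel₀]; exact hzn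
          nlinarith
        · nlinarith [mul_nonneg ht0 (neg_nonneg.mpr hneg.le)]
      · have hb : bnd n = (1 - x n) / z n := by simp [hbnd, hpos]
        constructor
        · nlinarith [mul_nonneg ht0 hpos.le]
        · have : t * z n ≤ bnd n * z n := mul_le_mul_of_nonneg_right htle hpos.le
          have hbz : bnd n * z n = 1 - x n := by rw [hb, div_mul_cancel₀]; exact hzn
          nlinarith
  · have hzj : z j ≠ 0 := (Finset.mem_filter.mp hjT).2
    by_cases h : 0 < z j
    · left
      have ht : t = (1 - x j) / z j := by simp [htdef, hbnd, h]
      show x j + t * z j = 1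
      rw [ht, div_mul_cancel₀ _ hzj]; ring
    · right
      have ht : t = (-1 - x j) / z j := by simp [htdef, hbnd, h]
      show x j + t * z j = -1
      rw [ht, div_mul_cancel₀ _ hzj]; ring
  · have : ∑ n ∈ B, (x n + t * z n) • v n
        = ∑ n ∈ B, x n • v n + t • ∑ n ∈ B, z n • v n := by
      rw [Finset.smul_sum, ← Finset.sum_add_distrib]
      apply Finset.sum_congr rfl
      intro n _
      rw [add_smul, smul_smul]
    rw [this, hzsum, smul_zero, add_zero]

lemma bg_aux (d : ℕ) (v : ℕ → EuclideanSpace ℝ (Fin d)) (s : ℝ) (hs : 0 ≤ s)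
    (J : Finset ℕ) :
    (∀ n ∈ J, ‖v n‖ ≤ s) →
    ∃ (x : ℕ → ℝ) (A : Finset ℕ), A ⊆ J ∧ A.card ≤ d ∧ (∀ n ∈ J, |x n| ≤ 1) ∧
      (∀ n ∈ J, n ∉ A → x n = 1 ∨ x n = -1) ∧ (∑ n ∈ J, x n • v n = 0) ∧
      ∀ ε : ℕ → ℝ, (∀ n, ε n = 1 ∨ ε n = -1) → (∀ n ∈ J, n ∉ A → ε n = x n) →
        ∀ P : ℕ, ‖∑ n ∈ J.filter (· < P), ε n • v n‖ ≤ (2*(d:ℝ)+2)*s := by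
  classical
  induction J using Finset.induction_on_max with
  | empty =>
    intro _
    refine ⟨fun _ => 1, ∅, Finset.Subset.refl _, by simp, by simp, by simp, by simp, ?_⟩
    intro ε hε hεx P
    simp only [Finset.filter_empty, Finset.sum_empty, norm_zero]
    positivity
  | insert m J₀ hmax IH =>
    intro hv
    have hmJ₀ : m ∉ J₀ := fun h => lt_irrefl m (hmax m h)
    obtain ⟨x₀, A₀, hA₀J, hA₀card, hx₀le, hx₀fix, hx₀sum, hx₀bd⟩ :=
      IH (fun n hn => hv n (Finset.mem_insert_of_mem hn))
    set x₁ : ℕ → ℝ := fun n => if n = m then 0 else x₀ n with hx₁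
    have hx₁J₀ : ∀ n ∈ J₀, x₁ n = x₀ n := by
      intro n hn
      have : n ≠ m := fun h => hmJ₀ (h ▸ hn)
      simp [hx₁, this]
    have hsum₁ : ∑ n ∈ insert m J₀, x₁ n • v n = 0 := by
      rw [Finset.sum_insert hmJ₀]
      have : x₁ m = 0 := by simp [hx₁]
      rw [this, zero_smul, zero_add]
      rw [← hx₀sum]
      exact Finset.sum_congr rfl fun n hn => by rw [hx₁J₀ n hn]
    set B : Finset ℕ := insert m A₀ with hBdef
    have hmA₀ : m ∉ A₀ := fun h => hmJ₀ (hA₀J h)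
    have hBJ : B ⊆ insert m J₀ := Finset.insert_subset_insert m hA₀J
    have hx₁B : ∀ n ∈ B, |x₁ n| ≤ 1 := by
      intro n hn
      rcases Finset.mem_insert.mp hn with rfl | hn'
      · simp [hx₁]
      · rw [hx₁J₀ n (hA₀J hn')]
        exact hx₀le n (hA₀J hn')
    -- common final-bound argument
    have key : ∀ (x : ℕ → ℝ) (A : Finset ℕ), A ⊆ insert m J₀ → A.card ≤ d →
        (∀ n ∈ insert m J₀, |x n| ≤ 1) →
        (∑ n ∈ insert m J₀, x n • v n = 0) →
        (∀ n ∈ J₀, n ∉ A₀ → x n = x₀ n) →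
        (A₀ \ (A \ {m}) = ∅ → True) →  -- dummy
        (∀ n ∈ J₀, n ∉ A₀ → n ∉ A) →
        ∀ ε : ℕ → ℝ, (∀ n, ε n = 1 ∨ ε n = -1) → (∀ n ∈ insert m J₀, n ∉ A → ε n = x n) →
        ∀ P : ℕ, ‖∑ n ∈ (insert m J₀).filter (· < P), ε n • v n‖ ≤ (2*(d:ℝ)+2)*s := by
      intro x A hAsub hAcard hxle hxsum hxold _ hAold ε hε hεx P
      by_cases hP : m < P
      · -- full sum
        have hfull : (insert m J₀).filter (· < P) = insert m J₀ := by
          apply Finset.filter_true_of_mem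
          intro n hn
          rcases Finset.mem_insert.mp hn with rfl | hn'
          · exact hP
          · exact lt_trans (hmax n hn') hP
        rw [hfull]
        have hdecomp : ∑ n ∈ insert m J₀, ε n • v n
            = ∑ n ∈ insert m J₀, x n • v n + ∑ n ∈ insert m J₀, (ε n - x n) • v n := by
          rw [← Finset.sum_add_distrib]
          exact Finset.sum_congr rfl fun n _ => by rw [← add_smul]; ring_nf
        rw [hdecomp, hxsum, zero_add]
        have hsupp : ∀ n ∈ insert m J₀, n ∉ A → (ε n - x n) • v n = 0 := by
          intro n hn hnA
          rw [hεx n hn hnA, sub_self, zero_smul]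
        rw [← Finset.sum_subset hAsub (fun n hn hnA => hsupp n hn hnA)]
        calc ‖∑ n ∈ A, (ε n - x n) • v n‖ ≤ ∑ n ∈ A, ‖(ε n - x n) • v n‖ :=
              norm_sum_le _ _
          _ ≤ ∑ n ∈ A, 2 * s := by
              apply Finset.sum_le_sum
              intro n hn
              rw [norm_smul]
              have h2 : ‖v n‖ ≤ s := hv n (hAsub hn)
              have h3 := hxle n (hAsub hn)
              have h1 : |ε n - x n| ≤ 2 := by
                rw [abs_le] at h3 ⊢
                rcases hε n with h | h <;> rw [h] <;> constructor <;> linarith [h3.1, h3.2]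
              exact mul_le_mul h1 h2 (norm_nonneg _) (by norm_num)
          _ ≤ (2*(d:ℝ)+2)*s := by
              rw [Finset.sum_const, nsmul_eq_mul]
              have : (A.card : ℝ) ≤ d := by exact_mod_cast hAcard
              nlinarith [hs]
      · -- prefix inside J₀
        have hfilter : (insert m J₀).filter (· < P) = J₀.filter (· < P) := by
          rw [Finset.filter_insert, if_neg hP]
        rw [hfilter]
        apply hx₀bd ε hε
        intro n hn hnA₀
        rw [← hxold n hn hnA₀]
        exact hεx n (Finset.mem_insert_of_mem hn) (hAold n hn hnA₀)
    by_cases hcard : B.card ≤ d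
    · -- no rounding needed
      refine ⟨x₁, B, hBJ, hcard, ?_, ?_, hsum₁, ?_⟩
      · intro n hn
        rcases Finset.mem_insert.mp hn with rfl | hn'
        · simp [hx₁]
        · rw [hx₁J₀ n hn']
          exact hx₀le n hn'
      · intro n hn hnB
        rcases Finset.mem_insert.mp hn with rfl | hn'
        · exact absurd (by rw [hBdef]; exact Finset.mem_insert_self _ _) hnB
        · rw [hx₁J₀ n hn']
          exact hx₀fix n hn' (fun h => hnB (Finset.mem_insert_of_mem h))
      · apply key x₁ B hBJ hcard
        · intro n hn
          rcases Finset.mem_insert.mp hn with rfl | hn'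
          · simp [hx₁]
          · rw [hx₁J₀ n hn']; exact hx₀le n hn'
        · exact hsum₁
        · intro n hn _; exact hx₁J₀ n hn
        · intro _; trivial
        · intro n hn hnA₀ hmem
          rcases Finset.mem_insert.mp hmem with rfl | h
          · exact hmJ₀ hn
          · exact hnA₀ h
    · -- rounding
      have hBcard : d + 1 ≤ B.card := by
        push_neg at hcard; omega
      obtain ⟨x', j, hjB, hx'off, hx'le, hx'j, hx'sum⟩ := round_step d v B hBcard x₁ hx₁B
      set A : Finset ℕ := B.erase j with hAdef
      have hAsub : A ⊆ insert m J₀ := fun n hn => hBJ (Finset.mem_of_mem_erase hn)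
      have hAcard : A.card ≤ d := by
        rw [hAdef, Finset.card_erase_of_mem hjB]
        have : B.card ≤ A₀.card + 1 := Finset.card_insert_le m A₀
        omega
      have hx'J₀ : ∀ n ∈ J₀, n ∉ A₀ → x' n = x₀ n := by
        intro n hn hnA₀
        have hnm : n ≠ m := fun h => hmJ₀ (h ▸ hn)
        have hnB : n ∉ B := by
          intro h
          rcases Finset.mem_insert.mp h with h' | h'
          · exact hnm h'
          · exact hnA₀ h'
        rw [hx'off n hnB, hx₁J₀ n hn]
      have hx'sum0 : ∑ n ∈ insert m J₀, x' n • v n = 0 := by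
        have hsplit : ∀ (y : ℕ → ℝ), ∑ n ∈ insert m J₀, y n • v n
            = ∑ n ∈ B, y n • v n + ∑ n ∈ (insert m J₀) \ B, y n • v n := by
          intro y
          rw [← Finset.sum_union (Finset.disjoint_sdiff)]
          congr 1
          exact (Finset.union_sdiff_of_subset hBJ).symm
        rw [hsplit, hx'sum]
        have : ∑ n ∈ (insert m J₀) \ B, x' n • v n
            = ∑ n ∈ (insert m J₀) \ B, x₁ n • v n := by
          apply Finset.sum_congr rfl
          intro n hn
          rw [hx'off n (Finset.mem_sdiff.mp hn).2]
        rw [this, ← hsplit, hsum₁]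
      have hx'le' : ∀ n ∈ insert m J₀, |x' n| ≤ 1 := by
        intro n hn
        by_cases hnB : n ∈ B
        · exact hx'le n hnB
        · rw [hx'off n hnB]
          rcases Finset.mem_insert.mp hn with rfl | hn'
          · simp [hx₁]
          · rw [hx₁J₀ n hn']; exact hx₀le n hn'
      refine ⟨x', A, hAsub, hAcard, hx'le', ?_, hx'sum0, ?_⟩
      · intro n hn hnA
        by_cases hnB : n ∈ B
        · have : n = j := by
            by_contra hne
            exact hnA (Finset.mem_erase.mpr ⟨hne, hnB⟩)
          subst this
          exact hx'j
        · rcases Finset.mem_insert.mp hn with rfl | hn'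
          · exact absurd (by rw [hBdef]; exact Finset.mem_insert_self _ _) hnB
          · have hnA₀ : n ∉ A₀ := fun h => hnB (Finset.mem_insert_of_mem h)
            rw [hx'J₀ n hn' hnA₀]
            exact hx₀fix n hn' hnA₀
      · apply key x' A hAsub hAcard hx'le' hx'sum0 hx'J₀ (fun _ => trivial)
        intro n hn hnA₀ hmem
        have hnm : n ≠ m := fun h => hmJ₀ (h ▸ hn)
        have : n ∈ B := Finset.mem_of_mem_erase hmem
        rcases Finset.mem_insert.mp this with h | h
        · exact hnm h
        · exact hnA₀ h

lemma bg (d : ℕ) (v : ℕ → EuclideanSpace ℝ (Fin d)) (s : ℝ) (hs : 0 ≤ s)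
    (J : Finset ℕ) (hv : ∀ n ∈ J, ‖v n‖ ≤ s) :
    ∃ ε : ℕ → ℝ, (∀ n, ε n = 1 ∨ ε n = -1) ∧
      ∀ P : ℕ, ‖∑ n ∈ J.filter (· < P), ε n • v n‖ ≤ (2*(d:ℝ)+2)*s := by
  classical
  obtain ⟨x, A, hAJ, hAcard, hxle, hxfix, hxsum, hbd⟩ := bg_aux d v s hs J hv
  refine ⟨fun n => if x n = -1 then -1 else 1, fun n => by by_cases h : x n = -1 <;> simp [h], ?_⟩
  apply hbd
  · intro n; by_cases h : x n = -1 <;> simp [h]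
  · intro n hn hnA
    rcases hxfix n hn hnA with h | h <;> simp [h] <;> norm_num

lemma mass_exists (d : ℕ) (a : ℕ → EuclideanSpace ℝ (Fin d)) (u : Fin d → EuclideanSpace ℝ (Fin d))
    (hLevy : ∀ i, ∀ δ : ℝ, 0 < δ →
      ¬ Summable (fun n => if ‖a n‖⁻¹ • a n ∈ Metric.ball (u i) δ then ‖a n‖ else 0))
    (i : Fin d) (δ : ℝ) (hδ : 0 < δ) (start : ℕ) (T : ℝ) :
    ∃ P, start ≤ P ∧
      T ≤ ∑ n ∈ Finset.Ico start P,
          (if ‖a n‖⁻¹ • a n ∈ Metric.ball (u i) δ then ‖a n‖ else 0) := by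
  classical
  set f : ℕ → ℝ := fun n => if ‖a n‖⁻¹ • a n ∈ Metric.ball (u i) δ then ‖a n‖ else 0 with hf
  have hfnn : ∀ n, 0 ≤ f n := by
    intro n; rw [hf]; dsimp only; split <;> simp [norm_nonneg]
  by_contra hcon
  push_neg at hcon
  have hbound : ∀ m, ∑ n ∈ Finset.range m, f n ≤ ∑ n ∈ Finset.range start, f n + T := by
    intro m
    have h1 : ∑ n ∈ Finset.range m, f n ≤ ∑ n ∈ Finset.range (max m start), f n := by
      apply Finset.sum_le_sum_of_subset_of_nonneg
      · exact Finset.range_subset_range.mpr (le_max_left _ _)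
      · intro n _ _; exact hfnn n
    have h2 : ∑ n ∈ Finset.range (max m start), f n
        = ∑ n ∈ Finset.range start, f n + ∑ n ∈ Finset.Ico start (max m start), f n := by
      rw [Finset.range_eq_Ico]
      rw [← Finset.sum_Ico_consecutive f (Nat.zero_le start) (le_max_right m start)]
      rw [← Finset.range_eq_Ico]
    have h3 := hcon (max m start) (le_max_right _ _)
    linarith
  have : Summable f := summable_of_sum_range_le hfnn hbound
  exact hLevy i δ hδ this

set_option maxHeartbeats 1000000 in
lemma blockLemma (d : ℕ) (a : ℕ → EuclideanSpace ℝ (Fin d))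
    (u : Fin d → EuclideanSpace ℝ (Fin d)) (hu : ∀ i, ‖u i‖ = 1)
    (hLevy : ∀ i, ∀ δ : ℝ, 0 < δ →
      ¬ Summable (fun n => if ‖a n‖⁻¹ • a n ∈ Metric.ball (u i) δ then ‖a n‖ else 0))
    (b : Module.Basis (Fin d) ℝ (EuclideanSpace ℝ (Fin d))) (hb : ∀ i, b i = u i)
    (K : ℝ) (hK : 0 < K) (hKb : ∀ (w : EuclideanSpace ℝ (Fin d)) (i : Fin d), |b.repr w i| ≤ K * ‖w‖)
    (N : ℕ) (w : EuclideanSpace ℝ (Fin d)) (s : ℝ) (hs : 0 < s)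
    (hsa : ∀ n, N ≤ n → ‖a n‖ ≤ s) :
    ∃ M, N < M ∧ ∃ ε : ℕ → ℝ, (∀ n, ε n = 1 ∨ ε n = -1) ∧
      ‖(∑ n ∈ Finset.Ico N M, ε n • a n) - w‖ ≤ (4*(d:ℝ)+2)*s ∧
      ∀ P, N ≤ P → P ≤ M →
        ‖∑ n ∈ Finset.Ico N P, ε n • a n‖ ≤ (d:ℝ)*K*‖w‖ + (3*(d:ℝ)+2)*s := by
  classical
  set c : Fin d → ℝ := fun i => b.repr w i with hc
  have hcK : ∀ i, |c i| ≤ K * ‖w‖ := fun i => hKb w i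
  set δ : ℝ := s / (K * ‖w‖ + s) with hδdef
  have hden : 0 < K * ‖w‖ + s := by positivity
  have hδpos : 0 < δ := by positivity
  have hδle : δ * (K * ‖w‖ + s) = s := by
    rw [hδdef]; field_simp
  have hδ1 : δ ≤ 1 := by
    rw [hδdef, div_le_one hden]
    nlinarith [norm_nonneg w, hK.le]
  set cond : Fin d → ℕ → Prop := fun i n => ‖a n‖⁻¹ • a n ∈ Metric.ball (u i) δ with hcond
  set g : Fin d → ℕ → ℝ := fun i n => if cond i n then ‖a n‖ else 0 with hg
  have hgnn : ∀ i n, 0 ≤ g i n := by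
    intro i n; rw [hg]; dsimp only; split <;> simp [norm_nonneg]
  have hgle : ∀ i n, N ≤ n → g i n ≤ s := by
    intro i n hn; rw [hg]; dsimp only; split
    · exact hsa n hn
    · exact hs.le
  have segEx : ∀ (i : Fin d) (start : ℕ), ∃ P, start ≤ P ∧
      |c i| ≤ ∑ n ∈ Finset.Ico start P, g i n :=
    fun i start => mass_exists d a u hLevy i δ hδpos start (|c i|)
  -- the segment endpoints
  set seg : ℕ → ℕ := fun k =>
    Nat.rec N (fun k ih => if h : k < d then Nat.find (segEx ⟨k, h⟩ ih) else ih) k with hseg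
  have hseg0 : seg 0 = N := rfl
  have hsegsucc : ∀ k (h : k < d), seg (k+1) = Nat.find (segEx ⟨k, h⟩ (seg k)) := by
    intro k h
    simp only [hseg, dif_pos h]
  have hsegsucc' : ∀ k, ¬ (k < d) → seg (k+1) = seg k := by
    intro k h
    simp only [hseg, dif_neg h]
  have hseg_step : ∀ k, seg k ≤ seg (k+1) := by
    intro k
    by_cases h : k < d
    · rw [hsegsucc k h]
      exact (Nat.find_spec (segEx ⟨k, h⟩ (seg k))).1
    · rw [hsegsucc' k h]
  have hseg_mono : Monotone seg := monotone_nat_of_le_succ hseg_step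
  have hsegN : ∀ k, N ≤ seg k := fun k => hseg0 ▸ hseg_mono (Nat.zero_le k)
  -- mass bounds per class
  have hmass_lb : ∀ (i : Fin d), |c i| ≤ ∑ n ∈ Finset.Ico (seg i.val) (seg (i.val+1)), g i n := by
    intro i
    have h := hsegsucc i.val i.isLt
    have := (Nat.find_spec (segEx ⟨i.val, i.isLt⟩ (seg i.val))).2
    rw [← h] at this
    simpa using this
  have hmass_ub : ∀ (i : Fin d),
      ∑ n ∈ Finset.Ico (seg i.val) (seg (i.val+1)), g i n ≤ |c i| + s := by
    intro i
    have h := hsegsucc i.val i.isLt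
    rcases Nat.eq_or_lt_of_le ((Nat.find_spec (segEx ⟨i.val, i.isLt⟩ (seg i.val))).1) with heq | hlt
    · rw [← h] at heq
      rw [← heq]
      simp [abs_nonneg, hs.le]
      positivity
    · rw [← h] at hlt
      obtain ⟨Q, hQ⟩ : ∃ Q, seg (i.val+1) = Q + 1 := ⟨seg (i.val+1) - 1, by omega⟩
      have hQge : seg i.val ≤ Q := by omega
      have hQlt : Q < Nat.find (segEx ⟨i.val, i.isLt⟩ (seg i.val)) := by omega
      have hnot := Nat.find_min (segEx ⟨i.val, i.isLt⟩ (seg i.val)) hQlt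
      push_neg at hnot
      have hQmass := hnot hQge
      have : (⟨i.val, i.isLt⟩ : Fin d) = i := by ext; rfl
      rw [this] at hQmass
      rw [hQ, Finset.sum_Ico_succ_top hQge]
      have hgQ : g i Q ≤ s := hgle i Q (le_trans (hsegN i.val) hQge)
      linarith
  set M : ℕ := max (seg d) (N+1) with hM
  have hNM : N < M := lt_of_lt_of_le (Nat.lt_succ_self N) (le_max_right _ _)
  have hsegdM : seg d ≤ M := le_max_left _ _
  -- classes
  set G : Fin d → Finset ℕ :=
    fun i => (Finset.Ico (seg i.val) (seg (i.val+1))).filter (cond i) with hG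
  have hGsub : ∀ i, G i ⊆ Finset.Ico N M := by
    intro i n hn
    rw [hG] at hn
    have hn' := Finset.mem_filter.mp hn |>.1
    rw [Finset.mem_Ico] at hn' ⊢
    constructor
    · exact le_trans (hsegN i.val) hn'.1
    · exact lt_of_lt_of_le hn'.2 (le_trans (hseg_mono (by omega : i.val + 1 ≤ d)) hsegdM)
  have hGdisj : ∀ i j, i ≠ j → Disjoint (G i) (G j) := by
    intro i j hij
    rw [Finset.disjoint_left]
    intro n hni hnj
    rw [hG, Finset.mem_filter, Finset.mem_Ico] at hni hnj
    rcases lt_or_gt_of_ne hij with h | h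
    · have : (i.val + 1 : ℕ) ≤ j.val := h
      have := hseg_mono this
      omega
    · have : (j.val + 1 : ℕ) ≤ i.val := h
      have := hseg_mono this
      omega
  -- class mass equals g-sum
  have hGsum : ∀ i, ∑ n ∈ G i, ‖a n‖ = ∑ n ∈ Finset.Ico (seg i.val) (seg (i.val+1)), g i n := by
    intro i
    rw [hG, hg]
    dsimp only
    simp only [Finset.sum_filter]
  -- junk
  set BIG : Finset ℕ := Finset.univ.biUnion G with hBIG
  have hBIGsub : BIG ⊆ Finset.Ico N M := by
    intro n hn
    rw [hBIG, Finset.mem_biUnion] at hn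
    obtain ⟨i, _, hi⟩ := hn
    exact hGsub i hi
  set J : Finset ℕ := (Finset.Ico N M) \ BIG with hJ
  obtain ⟨εJ, hεJpm, hεJbd⟩ := bg d a s hs.le J (by
    intro n hn
    rw [hJ, Finset.mem_sdiff, Finset.mem_Ico] at hn
    exact hsa n hn.1.1)
  set sgnv : Fin d → ℝ := fun i => if c i < 0 then -1 else 1 with hsgnv
  set ε : ℕ → ℝ := fun n => if h : ∃ i, n ∈ G i then sgnv (Classical.choose h) else εJ n with hε
  have hεpm : ∀ n, ε n = 1 ∨ ε n = -1 := by
    intro n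
    rw [hε]; dsimp only
    split
    · rw [hsgnv]; dsimp only; split
      · right; rfl
      · left; rfl
    · exact hεJpm n
  have hεG : ∀ (i : Fin d) (n : ℕ), n ∈ G i → ε n = sgnv i := by
    intro i n hn
    rw [hε]; dsimp only
    rw [dif_pos ⟨i, hn⟩]
    by_contra hne0
    have hch := Classical.choose_spec (⟨i, hn⟩ : ∃ i, n ∈ G i)
    by_cases hne : Classical.choose (⟨i, hn⟩ : ∃ i, n ∈ G i) = i
    · exact hne0 (by rw [hne])
    · exact (Finset.disjoint_left.mp (hGdisj _ i hne) hch) hn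
  have hεJeq : ∀ n ∈ J, ε n = εJ n := by
    intro n hn
    rw [hJ, Finset.mem_sdiff] at hn
    rw [hε]; dsimp only
    rw [dif_neg]
    intro ⟨i, hi⟩
    exact hn.2 (Finset.mem_biUnion.mpr ⟨i, Finset.mem_univ i, hi⟩)
  -- decomposition of partial sums
  have hdecomp : ∀ P, N ≤ P → P ≤ M →
      ∑ n ∈ Finset.Ico N P, ε n • a n
        = (∑ i : Fin d, ∑ n ∈ (G i).filter (· < P), ε n • a n)
          + ∑ n ∈ J.filter (· < P), εJ n • a n := by
    intro P hNP hPM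
    have hsplit : Finset.Ico N P = (BIG ∪ J).filter (· < P) := by
      rw [hJ, Finset.union_sdiff_of_subset hBIGsub]
      ext n
      simp only [Finset.mem_Ico, Finset.mem_filter]
      constructor
      · intro ⟨h1, h2⟩; exact ⟨⟨h1, lt_of_lt_of_le h2 hPM⟩, h2⟩
      · intro ⟨⟨h1, _⟩, h3⟩; exact ⟨h1, h3⟩
    rw [hsplit, Finset.filter_union, Finset.sum_union]
    · congr 1
      · rw [hBIG, Finset.filter_biUnion]
        exact Finset.sum_biUnion fun i _ j _ hij =>
          Finset.disjoint_filter_filter (hGdisj i j hij)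
      · apply Finset.sum_congr rfl
        intro n hn
        rw [hεJeq n (Finset.mem_filter.mp hn).1]
    · apply Finset.disjoint_filter_filter
      rw [hJ]
      exact Finset.disjoint_sdiff
  -- class partial sums: norm bound
  have hclass_norm : ∀ (i : Fin d) (P : ℕ),
      ‖∑ n ∈ (G i).filter (· < P), ε n • a n‖ ≤ |c i| + s := by
    intro i P
    calc ‖∑ n ∈ (G i).filter (· < P), ε n • a n‖
        ≤ ∑ n ∈ (G i).filter (· < P), ‖ε n • a n‖ := norm_sum_le _ _
      _ = ∑ n ∈ (G i).filter (· < P), ‖a n‖ := by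
          apply Finset.sum_congr rfl
          intro n hn
          rw [norm_smul]
          rcases hεpm n with h | h <;> rw [h] <;> simp
      _ ≤ ∑ n ∈ G i, ‖a n‖ := by
          apply Finset.sum_le_sum_of_subset_of_nonneg (Finset.filter_subset _ _)
          intro n _ _; exact norm_nonneg _
      _ ≤ |c i| + s := by rw [hGsum]; exact hmass_ub i
    -- end
  -- (ii) partial bound
  have hpartial : ∀ P, N ≤ P → P ≤ M →
      ‖∑ n ∈ Finset.Ico N P, ε n • a n‖ ≤ (d:ℝ)*K*‖w‖ + (3*(d:ℝ)+2)*s := by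
    intro P hNP hPM
    rw [hdecomp P hNP hPM]
    calc ‖(∑ i : Fin d, ∑ n ∈ (G i).filter (· < P), ε n • a n)
          + ∑ n ∈ J.filter (· < P), εJ n • a n‖
        ≤ ‖∑ i : Fin d, ∑ n ∈ (G i).filter (· < P), ε n • a n‖
          + ‖∑ n ∈ J.filter (· < P), εJ n • a n‖ := norm_add_le _ _
      _ ≤ (∑ i : Fin d, (|c i| + s)) + (2*(d:ℝ)+2)*s := by
          apply add_le_add
          · exact le_trans (norm_sum_le _ _) (Finset.sum_le_sum fun i _ => hclass_norm i P)
          · exact hεJbd P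
      _ ≤ (d:ℝ)*K*‖w‖ + (3*(d:ℝ)+2)*s := by
          have h1 : ∑ i : Fin d, (|c i| + s) ≤ ∑ i : Fin d, (K*‖w‖ + s) :=
            Finset.sum_le_sum fun i _ => add_le_add_left (hcK i) s
          rw [Finset.sum_const, Finset.card_univ, Fintype.card_fin, nsmul_eq_mul] at h1
          nlinarith [hs.le]
  -- (i) full block error
  have hclass_err : ∀ (i : Fin d),
      ‖(∑ n ∈ G i, ε n • a n) - (c i) • u i‖ ≤ 2*s := by
    intro i
    have hmassub := hmass_ub i
    have hmasslb := hmass_lb i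
    rw [← hGsum] at hmassub hmasslb
    set mass : ℝ := ∑ n ∈ G i, ‖a n‖ with hmassdef
    have h1 : ∑ n ∈ G i, ε n • a n = sgnv i • ∑ n ∈ G i, a n := by
      rw [Finset.smul_sum]
      apply Finset.sum_congr rfl
      intro n hn
      rw [hεG i n hn]
    have h2 : ‖(∑ n ∈ G i, a n) - mass • u i‖ ≤ δ * mass := by
      rw [hmassdef, Finset.sum_smul]
      rw [← Finset.sum_sub_distrib]
      calc ‖∑ n ∈ G i, (a n - ‖a n‖ • u i)‖
          ≤ ∑ n ∈ G i, ‖a n - ‖a n‖ • u i‖ := norm_sum_le _ _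
        _ ≤ ∑ n ∈ G i, δ * ‖a n‖ := by
            apply Finset.sum_le_sum
            intro n hn
            rw [hG, Finset.mem_filter] at hn
            have hcondn : cond i n := hn.2
            rw [hcond] at hcondn
            have hane : a n ≠ 0 := by
              intro h0
              rw [h0] at hcondn
              simp only [norm_zero, smul_zero, Metric.mem_ball, dist_zero_left] at hcondn
              rw [hu i] at hcondn
              linarith
            have hna : ‖a n‖ ≠ 0 := norm_ne_zero_iff.mpr hane
            have : a n - ‖a n‖ • u i = ‖a n‖ • (‖a n‖⁻¹ • a n - u i) := by
              rw [smul_sub, smul_smul, mul_inv_cancel₀ hna, one_smul]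
            rw [this, norm_smul, norm_norm]
            rw [Metric.mem_ball, dist_eq_norm] at hcondn
            rw [mul_comm]
            exact mul_le_mul_of_nonneg_right hcondn.le (norm_nonneg _)
        _ = δ * mass := by rw [← Finset.mul_sum, hmassdef]
    have h3 : |sgnv i * mass - c i| ≤ s := by
      rw [hsgnv]; dsimp only
      split
      · next h =>
        rw [abs_le]
        constructor <;> [nlinarith [abs_of_neg h]; nlinarith [abs_of_neg h]]
      · next h =>
        push_neg at h
        rw [abs_le]
        constructor <;> [nlinarith [abs_of_nonneg h]; nlinarith [abs_of_nonneg h]]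
    have hsgnabs : |sgnv i| = 1 := by
      rw [hsgnv]; dsimp only; split <;> simp
    calc ‖(∑ n ∈ G i, ε n • a n) - (c i) • u i‖
        = ‖sgnv i • ((∑ n ∈ G i, a n) - mass • u i) + (sgnv i * mass - c i) • u i‖ := by
          rw [h1]
          congr 1
          rw [smul_sub, smul_smul, sub_smul]
          abel
      _ ≤ ‖sgnv i • ((∑ n ∈ G i, a n) - mass • u i)‖ + ‖(sgnv i * mass - c i) • u i‖ :=
          norm_add_le _ _
      _ ≤ 1 * (δ * mass) + s * 1 := by
          apply add_le_add
          · rw [norm_smul, Real.norm_eq_abs, hsgnabs, one_mul]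
            calc ‖(∑ n ∈ G i, a n) - mass • u i‖ ≤ δ * mass := h2
              _ = 1 * (δ * mass) := (one_mul _).symm
          · rw [norm_smul, Real.norm_eq_abs, hu i, mul_one]
            rw [mul_one]
            exact h3
      _ ≤ 2*s := by
          have hmass_nonneg : 0 ≤ mass := Finset.sum_nonneg fun n _ => norm_nonneg _
          have : δ * mass ≤ δ * (K*‖w‖ + s) := by
            apply mul_le_mul_of_nonneg_left _ hδpos.le
            calc mass ≤ |c i| + s := hmassub
              _ ≤ K*‖w‖ + s := add_le_add_left (hcK i) s
          rw [hδle] at this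
          linarith
  have hblock_err : ‖(∑ n ∈ Finset.Ico N M, ε n • a n) - w‖ ≤ (4*(d:ℝ)+2)*s := by
    have hdM := hdecomp M (le_of_lt hNM) le_rfl
    have hfilterall : ∀ i : Fin d, (G i).filter (· < M) = G i := by
      intro i
      apply Finset.filter_true_of_mem
      intro n hn
      exact (Finset.mem_Ico.mp (hGsub i hn)).2
    have hwrepr : ∑ i : Fin d, (c i) • u i = w := by
      have := b.sum_repr w
      rw [← this]
      apply Finset.sum_congr rfl
      intro i _
      rw [hb i, hc]
    rw [hdM]
    have : (∑ i : Fin d, ∑ n ∈ (G i).filter (· < M), ε n • a n)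
          + (∑ n ∈ J.filter (· < M), εJ n • a n) - w
        = (∑ i : Fin d, ((∑ n ∈ G i, ε n • a n) - (c i) • u i))
          + ∑ n ∈ J.filter (· < M), εJ n • a n := by
      rw [Finset.sum_sub_distrib, ← hwrepr]
      have : ∀ i : Fin d, ∑ n ∈ (G i).filter (· < M), ε n • a n = ∑ n ∈ G i, ε n • a n := by
        intro i; rw [hfilterall i]
      rw [Finset.sum_congr rfl (fun i _ => this i)]
      abel
    rw [this]
    calc ‖(∑ i : Fin d, ((∑ n ∈ G i, ε n • a n) - (c i) • u i))
          + ∑ n ∈ J.filter (· < M), εJ n • a n‖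
        ≤ (∑ i : Fin d, ‖(∑ n ∈ G i, ε n • a n) - (c i) • u i‖)
          + ‖∑ n ∈ J.filter (· < M), εJ n • a n‖ :=
          le_trans (norm_add_le _ _) (by gcongr; exact norm_sum_le _ _)
      _ ≤ (∑ i : Fin d, 2*s) + (2*(d:ℝ)+2)*s := by
          apply add_le_add
          · exact Finset.sum_le_sum fun i _ => hclass_err i
          · exact hεJbd M
      _ ≤ (4*(d:ℝ)+2)*s := by
          rw [Finset.sum_const, Finset.card_univ, Fintype.card_fin, nsmul_eq_mul]
          nlinarith [hs.le]
  exact ⟨M, hNM, ε, hεpm, hblock_err, hpartial⟩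

set_option maxHeartbeats 2000000 in
/-- If a null sequence `(aₙ)` in `ℝ^d` admits `d` linearly independent Lévy vectors, then its
achievement set of signed sums is all of `ℝ^d`. -/
theorem stmt11 (d : ℕ) (a : ℕ → EuclideanSpace ℝ (Fin d))
    (ha : Tendsto a atTop (nhds 0))
    (u : Fin d → EuclideanSpace ℝ (Fin d)) (hu : ∀ i, ‖u i‖ = 1)
    (hind : LinearIndependent ℝ u)
    (hLevy : ∀ i, ∀ δ : ℝ, 0 < δ →
      ¬ Summable (fun n => if ‖a n‖⁻¹ • a n ∈ Metric.ball (u i) δ then ‖a n‖ else 0)) :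
    {x : EuclideanSpace ℝ (Fin d) | ∃ ε : ℕ → ℝ, (∀ n, ε n = 1 ∨ ε n = -1) ∧
      Tendsto (fun N => ∑ n ∈ Finset.range N, ε n • a n) atTop (nhds x)} = Set.univ := by
  classical
  -- handle d = 0
  rcases Nat.eq_zero_or_pos d with rfl | hd
  · ext x
    simp only [Set.mem_setOf_eq, Set.mem_univ, iff_true]
    refine ⟨fun _ => 1, fun _ => Or.inl rfl, ?_⟩
    have : ∀ y z : EuclideanSpace ℝ (Fin 0), y = z := fun y z => Subsingleton.elim y z
    have hx : ∀ N, ∑ n ∈ Finset.range N, (1:ℝ) • a n = x := fun N => this _ _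
    exact Tendsto.congr (fun N => (hx N).symm)
      (tendsto_const_nhds : Tendsto (fun _ : ℕ => x) atTop (nhds x))
  -- setup
  ext x
  simp only [Set.mem_setOf_eq, Set.mem_univ, iff_true]
  haveI : Nonempty (Fin d) := ⟨⟨0, hd⟩⟩
  have hcard : Fintype.card (Fin d) = Module.finrank ℝ (EuclideanSpace ℝ (Fin d)) := by
    rw [Fintype.card_fin, finrank_euclideanSpace_fin]
  set b : Module.Basis (Fin d) ℝ (EuclideanSpace ℝ (Fin d)) :=
    basisOfLinearIndependentOfCardEqFinrank hind hcard with hbdef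
  have hb : ∀ i, b i = u i := by
    intro i
    rw [hbdef, coe_basisOfLinearIndependentOfCardEqFinrank]
  -- coordinate bound
  set K : ℝ := 1 + ∑ i : Fin d, ‖LinearMap.toContinuousLinearMap (b.coord i)‖ with hKdef
  have hKpos : 0 < K := by
    rw [hKdef]
    have : (0:ℝ) ≤ ∑ i : Fin d, ‖LinearMap.toContinuousLinearMap (b.coord i)‖ :=
      Finset.sum_nonneg fun i _ => norm_nonneg _
    linarith
  have hKb : ∀ (w : EuclideanSpace ℝ (Fin d)) (i : Fin d), |b.repr w i| ≤ K * ‖w‖ := by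
    intro w i
    have h1 : |b.repr w i| = ‖(LinearMap.toContinuousLinearMap (b.coord i)) w‖ := by
      rw [LinearMap.coe_toContinuousLinearMap']
      rw [Module.Basis.coord_apply]
      rfl
    rw [h1]
    calc ‖(LinearMap.toContinuousLinearMap (b.coord i)) w‖
        ≤ ‖LinearMap.toContinuousLinearMap (b.coord i)‖ * ‖w‖ :=
          ContinuousLinearMap.le_opNorm _ _
      _ ≤ K * ‖w‖ := by
          apply mul_le_mul_of_nonneg_right _ (norm_nonneg _)
          rw [hKdef]
          have : ‖LinearMap.toContinuousLinearMap (b.coord i)‖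
              ≤ ∑ j : Fin d, ‖LinearMap.toContinuousLinearMap (b.coord j)‖ :=
            Finset.single_le_sum (f := fun j => ‖LinearMap.toContinuousLinearMap (b.coord j)‖)
              (fun j _ => norm_nonneg _) (Finset.mem_univ i)
          linarith
  -- tail sup
  have hanorm : Tendsto (fun n => ‖a n‖) atTop (nhds 0) := by
    have := ha.norm
    simpa using this
  have hbdd : ∀ N : ℕ, BddAbove (Set.range fun n => ‖a (N + n)‖) := by
    intro N
    have h1 : Tendsto (fun n : ℕ => N + n) atTop atTop :=
      tendsto_atTop_atTop.mpr (fun b => ⟨b, fun n hn => by omega⟩)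
    exact (hanorm.comp h1).bddAbove_range
  set S : ℕ → ℝ := fun N => ⨆ n : ℕ, ‖a (N + n)‖ with hSdef
  have hSub : ∀ N n, N ≤ n → ‖a n‖ ≤ S N := by
    intro N n hNn
    have heq : N + (n - N) = n := by omega
    rw [← heq]
    exact le_ciSup (hbdd N) (n - N)
  have hS0 : ∀ N, 0 ≤ S N := fun N =>
    le_trans (norm_nonneg (a (N + 0))) (le_ciSup (hbdd N) 0)
  have hStend : Tendsto S atTop (nhds 0) := by
    rw [Metric.tendsto_atTop]
    intro ρ hρ
    rw [Metric.tendsto_atTop] at hanorm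
    obtain ⟨N₀, hN₀⟩ := hanorm (ρ/2) (by linarith)
    refine ⟨N₀, fun N hN => ?_⟩
    have hSN : S N ≤ ρ/2 := by
      apply ciSup_le
      intro n
      have := hN₀ (N + n) (by omega)
      rw [Real.dist_eq, sub_zero, abs_of_nonneg (norm_nonneg _)] at this
      linarith
    rw [Real.dist_eq, sub_zero, abs_of_nonneg (hS0 N)]
    linarith
  set sB : ℕ → ℝ := fun N => S N + (1/2)^N with hsBdef
  have hsBpos : ∀ N, 0 < sB N := fun N => by
    have : (0:ℝ) < (1/2)^N := by positivity
    have := hS0 N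
    rw [hsBdef]; dsimp only; linarith
  have hsBub : ∀ N n, N ≤ n → ‖a n‖ ≤ sB N := by
    intro N n h
    have : (0:ℝ) < (1/2)^N := by positivity
    have := hSub N n h
    rw [hsBdef]; dsimp only; linarith
  have hsBanti : Antitone sB := by
    intro N N' hNN'
    rw [hsBdef]; dsimp only
    apply add_le_add
    · apply ciSup_le
      intro n
      have heq : N + ((N' - N) + n) = N' + n := by omega
      rw [← heq]
      exact le_ciSup (hbdd N) _
    · apply pow_le_pow_of_le_one (by norm_num) (by norm_num) hNN'
  have hsBtend : Tendsto sB atTop (nhds 0) := by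
    rw [hsBdef]
    have h2 : Tendsto (fun N : ℕ => ((1:ℝ)/2)^N) atTop (nhds 0) := by
      apply tendsto_pow_atTop_nhds_zero_of_lt_one (by norm_num) (by norm_num)
    simpa using hStend.add h2
  -- step existence
  have stepEx : ∀ (N : ℕ) (ε : ℕ → ℝ), ∃ (M : ℕ) (ε' : ℕ → ℝ),
      N < M ∧ (∀ n, n < N → ε' n = ε n) ∧ (∀ n, N ≤ n → (ε' n = 1 ∨ ε' n = -1)) ∧
      ‖x - ∑ n ∈ Finset.range M, ε' n • a n‖ ≤ (4*(d:ℝ)+2) * sB N ∧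
      (∀ Q, N ≤ Q → Q ≤ M →
        ‖x - ∑ n ∈ Finset.range Q, ε' n • a n‖
          ≤ (1 + (d:ℝ)*K) * ‖x - ∑ n ∈ Finset.range N, ε n • a n‖ + (3*(d:ℝ)+2) * sB N) := by
    intro N ε
    set w := x - ∑ n ∈ Finset.range N, ε n • a n with hw
    obtain ⟨M, hNM, εB, hεBpm, hεBerr, hεBpart⟩ :=
      blockLemma d a u hu hLevy b hb K hKpos hKb N w (sB N) (hsBpos N) (fun n h => hsBub N n h)
    set ε' : ℕ → ℝ := fun n => if n < N then ε n else εB n with hε'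
    have hε'lt : ∀ n, n < N → ε' n = ε n := by
      intro n h; rw [hε']; dsimp only; rw [if_pos h]
    have hε'ge : ∀ n, N ≤ n → ε' n = εB n := by
      intro n h; rw [hε']; dsimp only; rw [if_neg (by omega)]
    have hIcoeq : ∀ Q, ∑ n ∈ Finset.Ico N Q, ε' n • a n = ∑ n ∈ Finset.Ico N Q, εB n • a n := by
      intro Q
      apply Finset.sum_congr rfl
      intro n hn
      rw [hε'ge n (Finset.mem_Ico.mp hn).1]
    have hrangeeq : ∑ n ∈ Finset.range N, ε' n • a n = ∑ n ∈ Finset.range N, ε n • a n := by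
      apply Finset.sum_congr rfl
      intro n hn
      rw [hε'lt n (Finset.mem_range.mp hn)]
    have hsplit : ∀ Q, N ≤ Q → ∑ n ∈ Finset.range Q, ε' n • a n
        = ∑ n ∈ Finset.range N, ε n • a n + ∑ n ∈ Finset.Ico N Q, εB n • a n := by
      intro Q hQ
      rw [Finset.range_eq_Ico, ← Finset.sum_Ico_consecutive _ (Nat.zero_le N) hQ,
        ← Finset.range_eq_Ico, hrangeeq, hIcoeq]
    refine ⟨M, ε', hNM, hε'lt, fun n h => by rw [hε'ge n h]; exact hεBpm n, ?_, ?_⟩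
    · rw [hsplit M hNM.le]
      have : x - (∑ n ∈ Finset.range N, ε n • a n + ∑ n ∈ Finset.Ico N M, εB n • a n)
          = -((∑ n ∈ Finset.Ico N M, εB n • a n) - w) := by
        rw [hw]; abel
      rw [this, norm_neg]
      exact hεBerr
    · intro Q hNQ hQM
      rw [hsplit Q hNQ]
      have : x - (∑ n ∈ Finset.range N, ε n • a n + ∑ n ∈ Finset.Ico N Q, εB n • a n)
          = w - ∑ n ∈ Finset.Ico N Q, εB n • a n := by
        rw [hw]; abel
      rw [this]
      calc ‖w - ∑ n ∈ Finset.Ico N Q, εB n • a n‖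
          ≤ ‖w‖ + ‖∑ n ∈ Finset.Ico N Q, εB n • a n‖ := norm_sub_le _ _
        _ ≤ ‖w‖ + ((d:ℝ)*K*‖w‖ + (3*(d:ℝ)+2) * sB N) := by
            have := hεBpart Q hNQ hQM
            linarith
        _ = (1 + (d:ℝ)*K) * ‖w‖ + (3*(d:ℝ)+2) * sB N := by ring
  -- the chain
  set F : ℕ → ℕ × (ℕ → ℝ) := fun k =>
    Nat.rec (0, fun _ => (1:ℝ))
      (fun _ st => ((stepEx st.1 st.2).choose, (stepEx st.1 st.2).choose_spec.choose)) k
    with hF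
  have hFsucc : ∀ k, F (k+1) = ((stepEx (F k).1 (F k).2).choose,
      (stepEx (F k).1 (F k).2).choose_spec.choose) := fun k => rfl
  have spec : ∀ k, (F k).1 < (F (k+1)).1 ∧
      (∀ n, n < (F k).1 → (F (k+1)).2 n = (F k).2 n) ∧
      (∀ n, (F k).1 ≤ n → ((F (k+1)).2 n = 1 ∨ (F (k+1)).2 n = -1)) ∧
      ‖x - ∑ n ∈ Finset.range (F (k+1)).1, (F (k+1)).2 n • a n‖ ≤ (4*(d:ℝ)+2) * sB (F k).1 ∧
      (∀ Q, (F k).1 ≤ Q → Q ≤ (F (k+1)).1 →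
        ‖x - ∑ n ∈ Finset.range Q, (F (k+1)).2 n • a n‖
          ≤ (1 + (d:ℝ)*K) * ‖x - ∑ n ∈ Finset.range (F k).1, (F k).2 n • a n‖
            + (3*(d:ℝ)+2) * sB (F k).1) := by
    intro k
    rw [hFsucc k]
    exact (stepEx (F k).1 (F k).2).choose_spec.choose_spec
  -- basic chain facts
  have hNmono : ∀ k, (F k).1 < (F (k+1)).1 := fun k => (spec k).1
  have hNk : ∀ k, k ≤ (F k).1 := by
    intro k
    induction k with
    | zero => exact Nat.zero_le _
    | succ k ih => exact lt_of_le_of_lt ih (hNmono k)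
  have hNleAdd : ∀ k j, (F k).1 ≤ (F (k + j)).1 := by
    intro k j
    induction j with
    | zero => exact le_refl _
    | succ j ih => exact le_trans ih (hNmono (k + j)).le
  have hNle : ∀ k k', k ≤ k' → (F k).1 ≤ (F k').1 := by
    intro k k' h
    have heq : k' = k + (k' - k) := by omega
    rw [heq]
    exact hNleAdd k (k' - k)
  have hstabAdd : ∀ k j n, n < (F k).1 → (F (k + j)).2 n = (F k).2 n := by
    intro k j n hn
    induction j with
    | zero => rfl
    | succ j ih =>
      rw [show k + (j+1) = (k+j) + 1 from rfl]
      rw [(spec (k+j)).2.1 n (lt_of_lt_of_le hn (hNleAdd k j))]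
      exact ih
  have hstab : ∀ k k', k ≤ k' → ∀ n, n < (F k).1 → (F k').2 n = (F k).2 n := by
    intro k k' h n hn
    have heq : k' = k + (k' - k) := by omega
    rw [heq]
    exact hstabAdd k (k' - k) n hn
  have hsgn : ∀ k n, n < (F k).1 → ((F k).2 n = 1 ∨ (F k).2 n = -1) := by
    intro k
    induction k with
    | zero => intro n hn; simp [hF] at hn
    | succ k ih =>
      intro n hn
      rcases Nat.lt_or_ge n (F k).1 with h | h
      · rw [(spec k).2.1 n h]
        exact ih n h
      · exact (spec k).2.2.1 n h
  -- final sign sequence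
  set ε : ℕ → ℝ := fun n => (F (n+1)).2 n with hεdef
  have hεeq : ∀ k n, n < (F k).1 → ε n = (F k).2 n := by
    intro k n hn
    rw [hεdef]; dsimp only
    have hn1 : n < (F (n+1)).1 := lt_of_lt_of_le (Nat.lt_succ_self n) (hNk (n+1))
    rcases Nat.le_total (n+1) k with h | h
    · exact (hstab (n+1) k h n hn1).symm
    · exact hstab k (n+1) h n hn
  have hεpm : ∀ n, ε n = 1 ∨ ε n = -1 := by
    intro n
    rw [hεdef]; dsimp only
    exact hsgn (n+1) n (lt_of_lt_of_le (Nat.lt_succ_self n) (hNk (n+1)))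
  refine ⟨ε, hεpm, ?_⟩
  -- partial sums agree
  have hsum_eq : ∀ k Q, Q ≤ (F k).1 →
      ∑ n ∈ Finset.range Q, ε n • a n = ∑ n ∈ Finset.range Q, (F k).2 n • a n := by
    intro k Q hQ
    apply Finset.sum_congr rfl
    intro n hn
    rw [hεeq k n (lt_of_lt_of_le (Finset.mem_range.mp hn) hQ)]
  -- the distance bound sequence
  set D : ℕ → ℝ := fun k => ‖x - ∑ n ∈ Finset.range (F k).1, (F k).2 n • a n‖ with hD
  have hDnext : ∀ k, D (k+1) ≤ (4*(d:ℝ)+2) * sB (F k).1 := fun k => (spec k).2.2.2.1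
  have hsBFk : Tendsto (fun k => sB (F k).1) atTop (nhds 0) := by
    rw [Metric.tendsto_atTop] at hsBtend ⊢
    intro ρ hρ
    obtain ⟨N₀, hN₀⟩ := hsBtend ρ hρ
    refine ⟨N₀, fun k hk => ?_⟩
    have h1 : N₀ ≤ (F k).1 := le_trans hk (hNk k)
    have h2 := hN₀ (F k).1 h1
    rw [Real.dist_eq, sub_zero] at h2 ⊢
    rw [abs_of_nonneg (hsBpos _).le] at h2 ⊢
    calc sB (F k).1 ≤ sB (F k).1 := le_refl _
      _ < ρ := h2
  have hDtend : Tendsto D atTop (nhds 0) := by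
    rw [← tendsto_add_atTop_iff_nat 1]
    apply squeeze_zero (fun k => norm_nonneg _) (fun k => hDnext k)
    have : Tendsto (fun k => (4*(d:ℝ)+2) * sB (F k).1) atTop (nhds ((4*(d:ℝ)+2) * 0)) :=
      hsBFk.const_mul _
    simpa using this
  have hBtend : Tendsto (fun k => (1 + (d:ℝ)*K) * D k + (3*(d:ℝ)+2) * sB (F k).1)
      atTop (nhds 0) := by
    have h1 : Tendsto (fun k => (1 + (d:ℝ)*K) * D k) atTop (nhds ((1 + (d:ℝ)*K) * 0)) :=
      hDtend.const_mul _
    have h2 : Tendsto (fun k => (3*(d:ℝ)+2) * sB (F k).1) atTop (nhds ((3*(d:ℝ)+2) * 0)) :=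
      hsBFk.const_mul _
    have := h1.add h2
    simpa using this
  -- conclude
  rw [Metric.tendsto_atTop]
  intro ρ hρ
  rw [Metric.tendsto_atTop] at hBtend
  obtain ⟨k₀, hk₀⟩ := hBtend ρ hρ
  refine ⟨(F k₀).1, fun m hm => ?_⟩
  -- find the block containing m
  set P : ℕ → Prop := fun k => (F k).1 ≤ m with hP
  have hPk₀ : P k₀ := hm
  have hk₀m : k₀ ≤ m := le_trans (hNk k₀) hm
  set k := Nat.findGreatest P m with hk
  have hPk : P k := Nat.findGreatest_spec hk₀m hPk₀
  have hkk₀ : k₀ ≤ k := Nat.le_findGreatest hk₀m hPk₀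
  have hmlt : m < (F (k+1)).1 := by
    by_contra hcon
    push_neg at hcon
    have hk1m : k + 1 ≤ m := le_trans (hNk (k+1)) hcon
    have := Nat.findGreatest_is_greatest (P := P) (n := m)
      (show Nat.findGreatest P m < k + 1 by omega) hk1m
    exact this hcon
  -- apply block bound
  have hbound := (spec k).2.2.2.2 m hPk hmlt.le
  have heq : ∑ n ∈ Finset.range m, ε n • a n = ∑ n ∈ Finset.range m, (F (k+1)).2 n • a n :=
    hsum_eq (k+1) m hmlt.le
  rw [dist_eq_norm]
  have : ‖(∑ n ∈ Finset.range m, ε n • a n) - x‖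
      = ‖x - ∑ n ∈ Finset.range m, (F (k+1)).2 n • a n‖ := by
    rw [heq, norm_sub_rev]
  rw [this]
  calc ‖x - ∑ n ∈ Finset.range m, (F (k+1)).2 n • a n‖
      ≤ (1 + (d:ℝ)*K) * D k + (3*(d:ℝ)+2) * sB (F k).1 := hbound
    _ < ρ := by
        have := hk₀ k hkk₀
        rw [Real.dist_eq, sub_zero] at this
        calc (1 + (d:ℝ)*K) * D k + (3*(d:ℝ)+2) * sB (F k).1
            ≤ |(1 + (d:ℝ)*K) * D k + (3*(d:ℝ)+2) * sB (F k).1| := le_abs_self _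
          _ < ρ := this
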